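/- arXiv:2303.05784 — 2 statements merged into one kernel-verified Lean document; each statement's English description precedes it below -/
import Mathlib

section
/- If $v$ lies in the Adini-type shape function space $\mathcal{P}_A = Q_1 \cdot \operatorname{span}\{1, x_k^2, x_k^4 : 1\le k\le n\}$, then $\partial v / \partial x_i$ lies in $Q_1 \cdot \operatorname{span}\{1, x_i^2\} + W_i$, where $W_i = Q_1^{\hat i} \cdot \operatorname{span}\{(x_k^2-1) : k \ne i\} + Q_1^{\hat i} \cdot \operatorname{span}\{(x_t^2-1)^2 : 1 \le t \le n\}$. -/
open MvPolynomial

/-- `Q1`: span of the multilinear monomials (each exponent at most 1). -/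
noncomputable def Q1 (n : ℕ) : Submodule ℝ (MvPolynomial (Fin n) ℝ) :=
  Submodule.span ℝ {p | ∃ α : Fin n →₀ ℕ, (∀ i, α i ≤ 1) ∧ p = monomial α (1 : ℝ)}

/-- `Q1^{î}`: the span of multilinear monomials not involving `x_i`. -/
noncomputable def Q1hat (n : ℕ) (i : Fin n) : Submodule ℝ (MvPolynomial (Fin n) ℝ) :=
  Submodule.span ℝ
    {p | ∃ α : Fin n →₀ ℕ, (∀ j, α j ≤ 1) ∧ α i = 0 ∧ p = monomial α (1 : ℝ)}

/-- `A · B`: the span of products of elements of `A` and `B`. -/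
noncomputable def prodSpan {n : ℕ} (A B : Submodule ℝ (MvPolynomial (Fin n) ℝ)) :
    Submodule ℝ (MvPolynomial (Fin n) ℝ) :=
  Submodule.span ℝ {p | ∃ a ∈ A, ∃ b ∈ B, p = a * b}

/-- Adini-type shape function space `P_A = Q1 · span{1, x_k², x_k⁴}`. -/
noncomputable def PA (n : ℕ) : Submodule ℝ (MvPolynomial (Fin n) ℝ) :=
  prodSpan (Q1 n)
    (Submodule.span ℝ ({1} ∪ {p | ∃ k : Fin n, p = X k ^ 2 ∨ p = X k ^ 4}))

/-- `W_i = Q1^{î} · span{(x_k²-1) : k ≠ i} + Q1^{î} · span{(x_t²-1)² : 1 ≤ t ≤ n}`. -/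
noncomputable def Wspace (n : ℕ) (i : Fin n) : Submodule ℝ (MvPolynomial (Fin n) ℝ) :=
  prodSpan (Q1hat n i) (Submodule.span ℝ {p | ∃ k : Fin n, k ≠ i ∧ p = X k ^ 2 - 1}) ⊔
    prodSpan (Q1hat n i) (Submodule.span ℝ {p | ∃ t : Fin n, p = (X t ^ 2 - 1) ^ 2})

section Aux

variable {n : ℕ} {i : Fin n}

/-- The target space, abbreviated. -/
noncomputable def Tgt (n : ℕ) (i : Fin n) : Submodule ℝ (MvPolynomial (Fin n) ℝ) :=
  prodSpan (Q1 n) (Submodule.span ℝ {1, X i ^ 2}) ⊔ Wspace n i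

lemma Q1hat_le_Q1 : Q1hat n i ≤ Q1 n := by
  apply Submodule.span_mono
  rintro p ⟨α, h1, _, h3⟩
  exact ⟨α, h1, h3⟩

lemma memT1 {a b : MvPolynomial (Fin n) ℝ} (ha : a ∈ Q1 n)
    (hb : b ∈ Submodule.span ℝ {1, X i ^ 2}) : a * b ∈ Tgt n i :=
  Submodule.mem_sup_left (Submodule.subset_span ⟨a, ha, b, hb, rfl⟩)

lemma memW1 {a b : MvPolynomial (Fin n) ℝ} (ha : a ∈ Q1hat n i)
    (hb : b ∈ Submodule.span ℝ {p | ∃ k : Fin n, k ≠ i ∧ p = X k ^ 2 - 1}) :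
    a * b ∈ Tgt n i :=
  Submodule.mem_sup_right (Submodule.mem_sup_left (Submodule.subset_span ⟨a, ha, b, hb, rfl⟩))

lemma memW2 {a b : MvPolynomial (Fin n) ℝ} (ha : a ∈ Q1hat n i)
    (hb : b ∈ Submodule.span ℝ {p | ∃ t : Fin n, p = (X t ^ 2 - 1) ^ 2}) :
    a * b ∈ Tgt n i :=
  Submodule.mem_sup_right (Submodule.mem_sup_right (Submodule.subset_span ⟨a, ha, b, hb, rfl⟩))

lemma one_mem_span : (1 : MvPolynomial (Fin n) ℝ) ∈ Submodule.span ℝ {1, X i ^ 2} :=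
  Submodule.subset_span (Set.mem_insert _ _)

lemma Xi2_mem_span : (X i ^ 2 : MvPolynomial (Fin n) ℝ) ∈ Submodule.span ℝ {1, X i ^ 2} :=
  Submodule.subset_span (Set.mem_insert_iff.2 (Or.inr rfl))

lemma twoXi2_sub_one_mem_span :
    (2 * X i ^ 2 - 1 : MvPolynomial (Fin n) ℝ) ∈ Submodule.span ℝ {1, X i ^ 2} := by
  have h : (2 * X i ^ 2 - 1 : MvPolynomial (Fin n) ℝ) = (2:ℝ) • (X i ^ 2) - 1 := by
    rw [smul_eq_C_mul, map_ofNat]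
  rw [h]
  exact Submodule.sub_mem _ (Submodule.smul_mem _ _ Xi2_mem_span) one_mem_span

/-- The derivative of a multilinear monomial lies in `Q1hat`. -/
lemma pderiv_mono_mem_Q1hat {α : Fin n →₀ ℕ} (hα : ∀ j, α j ≤ 1) :
    pderiv i (monomial α (1:ℝ)) ∈ Q1hat n i := by
  rw [pderiv_monomial]
  rcases Nat.le_one_iff_eq_zero_or_eq_one.1 (hα i) with h0 | h1
  · rw [h0]; norm_num
  · rw [h1]
    norm_num
    apply Submodule.subset_span
    refine ⟨α - Finsupp.single i 1, fun j => ?_, ?_, rfl⟩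
    · rw [Finsupp.tsub_apply]
      exact le_trans (Nat.sub_le _ _) (hα j)
    · rw [Finsupp.tsub_apply, h1, Finsupp.single_eq_same]

lemma mem_Q1hat_gen {α : Fin n →₀ ℕ} (hα : ∀ j, α j ≤ 1) (hαi : α i = 0) :
    monomial α (1:ℝ) ∈ Q1hat n i :=
  Submodule.subset_span ⟨α, hα, hαi, rfl⟩

lemma mem_Q1_gen {α : Fin n →₀ ℕ} (hα : ∀ j, α j ≤ 1) :
    monomial α (1:ℝ) ∈ Q1 n :=
  Submodule.subset_span ⟨α, hα, rfl⟩

/-- decomposition of `m * X i ^ 4` for `m ∈ Q1hat`. -/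
lemma Xi4_decomp {m : MvPolynomial (Fin n) ℝ} (hm : m ∈ Q1hat n i) :
    m * X i ^ 4 ∈ Tgt n i := by
  have h : m * X i ^ 4 = m * (X i ^ 2 - 1) ^ 2 + m * (2 * X i ^ 2 - 1) := by ring
  rw [h]
  exact Submodule.add_mem _
    (memW2 hm (Submodule.subset_span ⟨i, rfl⟩))
    (memT1 (Q1hat_le_Q1 hm) twoXi2_sub_one_mem_span)

/-- decomposition of `m * X k ^ 2`, `k ≠ i`, for `m ∈ Q1hat`. -/
lemma Xk2_decomp {m : MvPolynomial (Fin n) ℝ} (hm : m ∈ Q1hat n i) {k : Fin n} (hk : k ≠ i) :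
    m * X k ^ 2 ∈ Tgt n i := by
  have h : m * X k ^ 2 = m * (X k ^ 2 - 1) + m * 1 := by ring
  rw [h]
  exact Submodule.add_mem _
    (memW1 hm (Submodule.subset_span ⟨k, hk, rfl⟩))
    (memT1 (Q1hat_le_Q1 hm) one_mem_span)

/-- decomposition of `m * X k ^ 4`, `k ≠ i`, for `m ∈ Q1hat`. -/
lemma Xk4_decomp {m : MvPolynomial (Fin n) ℝ} (hm : m ∈ Q1hat n i) {k : Fin n} (hk : k ≠ i) :
    m * X k ^ 4 ∈ Tgt n i := by
  have h : m * X k ^ 4 = m * (X k ^ 2 - 1) ^ 2 + m * ((2:ℝ) • (X k ^ 2 - 1)) + m * 1 := by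
    rw [smul_eq_C_mul, map_ofNat]; ring
  rw [h]
  exact Submodule.add_mem _ (Submodule.add_mem _
    (memW2 hm (Submodule.subset_span ⟨k, rfl⟩))
    (memW1 hm (Submodule.smul_mem _ _ (Submodule.subset_span ⟨k, hk, rfl⟩))))
    (memT1 (Q1hat_le_Q1 hm) one_mem_span)

/-- `monomial α 1 * X i ∈ Q1 · span{1, Xi²}` for multilinear `α`. -/
lemma mono_mul_Xi_mem {α : Fin n →₀ ℕ} (hα : ∀ j, α j ≤ 1) :
    monomial α (1:ℝ) * X i ∈ Tgt n i := by
  rcases Nat.le_one_iff_eq_zero_or_eq_one.1 (hα i) with h0 | h1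
  · -- α i = 0 : the product is still a multilinear monomial
    have h : monomial α (1:ℝ) * X i = monomial (α + Finsupp.single i 1) 1 * 1 := by
      rw [mul_one, X, monomial_mul, mul_one]
    rw [h]
    refine memT1 (mem_Q1_gen fun j => ?_) one_mem_span
    rw [Finsupp.add_apply]
    rcases eq_or_ne j i with rfl | hj
    · simp [h0]
    · simp [Finsupp.single_eq_of_ne' (Ne.symm hj), hα j]
  · -- α i = 1 : factor out the X i
    have hle : Finsupp.single i 1 ≤ α := by rw [Finsupp.single_le_iff, h1]
    have hsum : (α - Finsupp.single i 1) + Finsupp.single i 1 = α := tsub_add_cancel_of_le hle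
    have h : monomial α (1:ℝ) * X i = monomial (α - Finsupp.single i 1) 1 * X i ^ 2 := by
      rw [X, pow_two, monomial_mul, mul_one, monomial_mul, mul_one, monomial_mul, mul_one,
        ← add_assoc, hsum]
    rw [h]
    refine memT1 (mem_Q1_gen fun j => ?_) Xi2_mem_span
    rw [Finsupp.tsub_apply]
    exact le_trans (Nat.sub_le _ _) (hα j)

/-- `monomial α 1 * X i ^ 3 ∈ Tgt` for multilinear `α`. -/
lemma mono_mul_Xi3_mem {α : Fin n →₀ ℕ} (hα : ∀ j, α j ≤ 1) :
    monomial α (1:ℝ) * X i ^ 3 ∈ Tgt n i := by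
  rcases Nat.le_one_iff_eq_zero_or_eq_one.1 (hα i) with h0 | h1
  · -- α i = 0 : (a * X i) * X i ^ 2 with a * X i multilinear
    have h : monomial α (1:ℝ) * X i ^ 3 = monomial (α + Finsupp.single i 1) 1 * X i ^ 2 := by
      have h3 : (X i : MvPolynomial (Fin n) ℝ) ^ 3 = X i * X i ^ 2 := by ring
      rw [h3, ← mul_assoc]
      congr 1
      rw [X, monomial_mul, mul_one]
    rw [h]
    refine memT1 (mem_Q1_gen fun j => ?_) Xi2_mem_span
    rw [Finsupp.add_apply]
    rcases eq_or_ne j i with rfl | hj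
    · simp [h0]
    · simp [Finsupp.single_eq_of_ne' (Ne.symm hj), hα j]
  · -- α i = 1 : a = m * X i, so a * X i ^ 3 = m * X i ^ 4
    have hle : Finsupp.single i 1 ≤ α := by rw [Finsupp.single_le_iff, h1]
    have hsum : (α - Finsupp.single i 1) + Finsupp.single i 1 = α := tsub_add_cancel_of_le hle
    have h : monomial α (1:ℝ) * X i ^ 3 = monomial (α - Finsupp.single i 1) 1 * X i ^ 4 := by
      have : (X i : MvPolynomial (Fin n) ℝ) ^ 4 = X i * X i ^ 3 := by ring
      rw [this, ← mul_assoc]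
      congr 1
      rw [X, monomial_mul, mul_one, hsum]
    rw [h]
    refine Xi4_decomp (mem_Q1hat_gen (fun j => ?_) ?_)
    · rw [Finsupp.tsub_apply]
      exact le_trans (Nat.sub_le _ _) (hα j)
    · rw [Finsupp.tsub_apply, h1, Finsupp.single_eq_same]

/-- Core computation: `pderiv i (monomial α 1 * b) ∈ Tgt` for generators `b`. -/
lemma core {α : Fin n →₀ ℕ} (hα : ∀ j, α j ≤ 1)
    {b : MvPolynomial (Fin n) ℝ}
    (hb : b ∈ ({1} ∪ {p | ∃ k : Fin n, p = X k ^ 2 ∨ p = X k ^ 4} :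
      Set (MvPolynomial (Fin n) ℝ))) :
    pderiv i (monomial α (1:ℝ) * b) ∈ Tgt n i := by
  have hda : pderiv i (monomial α (1:ℝ)) ∈ Q1hat n i := pderiv_mono_mem_Q1hat hα
  rcases hb with hb | ⟨k, hb | hb⟩
  · -- b = 1
    rw [Set.mem_singleton_iff] at hb
    subst hb
    rw [mul_one]
    have h : pderiv i (monomial α (1:ℝ)) = pderiv i (monomial α (1:ℝ)) * 1 := (mul_one _).symm
    rw [h]
    exact memT1 (Q1hat_le_Q1 hda) one_mem_span
  · -- b = X k ^ 2
    subst hb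
    rw [pderiv_mul]
    rcases eq_or_ne k i with rfl | hk
    · have hd : pderiv k ((X k : MvPolynomial (Fin n) ℝ) ^ 2) = 2 * X k := by
        simp [pderiv_X]
      rw [hd]
      refine Submodule.add_mem _ (memT1 (Q1hat_le_Q1 hda) Xi2_mem_span) ?_
      have h : monomial α (1:ℝ) * (2 * X k) = (2:ℝ) • (monomial α (1:ℝ) * X k) := by
        rw [smul_eq_C_mul, map_ofNat]; ring
      rw [h]
      exact Submodule.smul_mem _ _ (mono_mul_Xi_mem hα)
    · have hd : pderiv i ((X k : MvPolynomial (Fin n) ℝ) ^ 2) = 0 := by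
        simp [pderiv_X, Pi.single_apply, hk.symm]
      rw [hd, mul_zero, add_zero]
      exact Xk2_decomp hda hk
  · -- b = X k ^ 4
    subst hb
    rw [pderiv_mul]
    rcases eq_or_ne k i with rfl | hk
    · have hd : pderiv k ((X k : MvPolynomial (Fin n) ℝ) ^ 4) = 4 * X k ^ 3 := by
        simp [pderiv_X]
      rw [hd]
      refine Submodule.add_mem _ (Xi4_decomp hda) ?_
      have h : monomial α (1:ℝ) * (4 * X k ^ 3) = (4:ℝ) • (monomial α (1:ℝ) * X k ^ 3) := by
        rw [smul_eq_C_mul, map_ofNat]; ring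
      rw [h]
      exact Submodule.smul_mem _ _ (mono_mul_Xi3_mem hα)
    · have hd : pderiv i ((X k : MvPolynomial (Fin n) ℝ) ^ 4) = 0 := by
        simp [pderiv_X, Pi.single_apply, hk.symm]
      rw [hd, mul_zero, add_zero]
      exact Xk4_decomp hda hk

end Aux

/-- If `v` lies in the Adini-type shape space `P_A`, then
`∂v/∂x_i ∈ Q1 · span{1, x_i²} + W_i`. -/
theorem adini_type_pderiv_decomposition (n : ℕ) (hn : 2 ≤ n) (i : Fin n)
    (v : MvPolynomial (Fin n) ℝ) (hv : v ∈ PA n) :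
    pderiv i v ∈
      prodSpan (Q1 n) (Submodule.span ℝ {1, X i ^ 2}) ⊔ Wspace n i := by
  show pderiv i v ∈ Tgt n i
  unfold PA prodSpan at hv
  induction hv using Submodule.span_induction with
  | mem p hp =>
    obtain ⟨a, ha, b, hb, rfl⟩ := hp
    -- induction on a ∈ Q1
    unfold Q1 at ha
    induction ha using Submodule.span_induction with
    | mem a ha =>
      obtain ⟨α, hα, rfl⟩ := ha
      -- induction on b ∈ span of generators
      induction hb using Submodule.span_induction with
      | mem b hb => exact core hα hb
      | zero => simp
      | add x y hx hy hx' hy' => rw [mul_add, map_add]; exact Submodule.add_mem _ hx' hy'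
      | smul c x hx hx' => rw [mul_smul_comm, (pderiv i).map_smul]; exact Submodule.smul_mem _ _ hx'
    | zero => simp
    | add x y hx hy hx' hy' => rw [add_mul, map_add]; exact Submodule.add_mem _ hx' hy'
    | smul c x hx hx' => rw [smul_mul_assoc, (pderiv i).map_smul]; exact Submodule.smul_mem _ _ hx'
  | zero => simp
  | add x y hx hy hx' hy' => rw [map_add]; exact Submodule.add_mem _ hx' hy'
  | smul c x hx hx' => rw [(pderiv i).map_smul]; exact Submodule.smul_mem _ _ hx'
end

section
/- If $v \in \mathcal{P}_A$ (Adini-type shape space) in $n$ variables and $v$ vanishes identically on every face $x_i = \pm 1$ of $[-1,1]^n$, then $v$ is divisible by $\prod_{i=1}^n (x_i^2 - 1)$; moreover since the total degree in each variable of elements of $\mathcal{P}_A$ constrains this, any such $v$ with all Adini-type DoFs zero must satisfy $v = 0$ given the inductive face structure. -/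
open MvPolynomial

variable {n : ℕ}

/-- Substitution `x_a := c`, keeping all variables. -/
noncomputable def psi (a : Fin n) (c : ℝ) :
    MvPolynomial (Fin n) ℝ →ₐ[ℝ] MvPolynomial (Fin n) ℝ :=
  aeval (fun i => if i = a then C c else X i)

lemma psi_X_self (a : Fin n) (c : ℝ) : psi a c (X a) = C c := by
  simp [psi]

lemma psi_X_ne (a : Fin n) (c : ℝ) {i : Fin n} (h : i ≠ a) : psi a c (X i) = X i := by
  simp [psi, h]

lemma eval_psi (a : Fin n) (c : ℝ) (x : Fin n → ℝ) (p : MvPolynomial (Fin n) ℝ) :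
    eval x (psi a c p) = eval (Function.update x a c) p := by
  have h : (eval x).comp ((psi a c) : MvPolynomial (Fin n) ℝ →+* MvPolynomial (Fin n) ℝ)
      = eval (Function.update x a c) := by
    apply MvPolynomial.ringHom_ext
    · intro r; simp [psi]
    · intro i
      by_cases hi : i = a <;> simp [psi, hi, Function.update_apply]
  exact DFunLike.congr_fun h p

lemma psi_eq_zero (a : Fin n) (c : ℝ) (p : MvPolynomial (Fin n) ℝ)
    (h : ∀ x : Fin n → ℝ, x a = c → eval x p = 0) : psi a c p = 0 := by
  apply MvPolynomial.funext
  intro x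
  rw [eval_psi, map_zero]
  exact h _ (Function.update_self a c x)

lemma X_sub_C_dvd_sub_psi (a : Fin n) (c : ℝ) (p : MvPolynomial (Fin n) ℝ) :
    (X a - C c) ∣ (p - psi a c p) := by
  induction p using MvPolynomial.induction_on with
  | C r => simp [psi]
  | add p q hp hq =>
      have : p + q - psi a c (p + q) = (p - psi a c p) + (q - psi a c q) := by
        rw [map_add]; ring
      rw [this]; exact dvd_add hp hq
  | mul_X p i hp =>
      have : p * X i - psi a c (p * X i)
          = (p - psi a c p) * X i + psi a c p * (X i - psi a c (X i)) := by
        rw [map_mul]; ring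
      rw [this]
      refine dvd_add (Dvd.dvd.mul_right hp _) (Dvd.dvd.mul_left ?_ _)
      by_cases hi : i = a
      · subst hi; rw [psi_X_self]
      · rw [psi_X_ne a c hi]; simp

lemma X_sub_C_dvd (a : Fin n) (c : ℝ) (p : MvPolynomial (Fin n) ℝ)
    (h : psi a c p = 0) : (X a - C c) ∣ p := by
  have := X_sub_C_dvd_sub_psi a c p
  rwa [h, sub_zero] at this

lemma psi_factor_ne_zero (a : Fin n) : ((X a - 1) * (X a + 1) : MvPolynomial (Fin n) ℝ) ≠ 0 := by
  intro h
  have := congrArg (eval (fun _ => (2:ℝ))) h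
  simp at this
  rcases this with h | h <;> norm_num at h

/-- Divisibility by the quadratic factor at one variable. -/
lemma q_dvd (a : Fin n) (p : MvPolynomial (Fin n) ℝ)
    (h1 : psi a 1 p = 0) (hm1 : psi a (-1) p = 0) :
    (X a - 1) * (X a + 1) ∣ p := by
  obtain ⟨w, hw⟩ : (X a - C 1) ∣ p := X_sub_C_dvd a 1 p h1
  have hw' : psi a (-1) w = 0 := by
    have : (0 : MvPolynomial (Fin n) ℝ) = (C (-1) - C 1) * psi a (-1) w := by
      rw [← hm1, hw, map_mul, map_sub, psi_X_self]; simp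
    have h2 : (C (-1) - C 1 : MvPolynomial (Fin n) ℝ) = C (-2) := by
      rw [← C_sub]; norm_num
    rw [h2] at this
    have := this.symm
    rcases mul_eq_zero.mp this with h | h
    · exfalso; exact (by norm_num : ((-2:ℝ)) ≠ 0) (by simpa using (MvPolynomial.C_eq_zero.mp h))
    · exact h
  obtain ⟨u, hu⟩ : (X a - C (-1)) ∣ w := X_sub_C_dvd a (-1) w hw'
  refine ⟨u, ?_⟩
  have e1 : (X a - C 1 : MvPolynomial (Fin n) ℝ) = X a - 1 := by simp
  have e2 : (X a - C (-1) : MvPolynomial (Fin n) ℝ) = X a + 1 := by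
    rw [map_neg, map_one]; ring
  rw [hw, hu, e1, e2]
  ring

/-- Product divisibility over a finset of variables. -/
lemma prod_q_dvd (s : Finset (Fin n)) (p : MvPolynomial (Fin n) ℝ)
    (h : ∀ i ∈ s, psi i 1 p = 0 ∧ psi i (-1) p = 0) :
    (∏ i ∈ s, (X i - 1) * (X i + 1)) ∣ p := by
  induction s using Finset.induction_on generalizing p with
  | empty => simpa using one_dvd p
  | @insert a s ha ih =>
      obtain ⟨w, hw⟩ := q_dvd a p (h a (Finset.mem_insert_self a s)).1
        (h a (Finset.mem_insert_self a s)).2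
      rw [Finset.prod_insert ha, hw]
      refine mul_dvd_mul_left _ (ih w ?_)
      intro i hi
      have hia : i ≠ a := by rintro rfl; exact ha hi
      have key : ∀ c : ℝ, psi i c p = (X a - 1) * (X a + 1) * psi i c w := by
        intro c
        rw [hw, map_mul, map_mul, map_sub, map_add, psi_X_ne i c hia.symm, map_one]
      constructor
      · have := (h i (Finset.mem_insert_of_mem hi)).1
        rw [key 1] at this
        exact (mul_eq_zero.mp this).resolve_left (psi_factor_ne_zero a)
      · have := (h i (Finset.mem_insert_of_mem hi)).2
        rw [key (-1)] at this
        exact (mul_eq_zero.mp this).resolve_left (psi_factor_ne_zero a)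

/-- The submodule of polynomials all of whose exponent vectors satisfy `P`. -/
noncomputable def suppSub (P : (Fin n →₀ ℕ) → Prop) :
    Submodule ℝ (MvPolynomial (Fin n) ℝ) where
  carrier := {v | ∀ α ∈ v.support, P α}
  add_mem' := by
    intro a b ha hb α hα
    rcases Finset.mem_union.mp (MvPolynomial.support_add hα) with h | h
    · exact ha α h
    · exact hb α h
  zero_mem' := by simp
  smul_mem' := by
    intro c v hv α hα
    exact hv α (MvPolynomial.support_smul hα)

lemma mem_suppSub {P : (Fin n →₀ ℕ) → Prop} {v : MvPolynomial (Fin n) ℝ} :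
    v ∈ suppSub P ↔ ∀ α ∈ v.support, P α := Iff.rfl

lemma mem_of_forall_monomial {M : Submodule ℝ (MvPolynomial (Fin n) ℝ)}
    {v : MvPolynomial (Fin n) ℝ}
    (h : ∀ α ∈ v.support, monomial α (coeff α v) ∈ M) : v ∈ M := by
  rw [← MvPolynomial.support_sum_monomial_coeff v]
  exact Submodule.sum_mem _ h

lemma Q1_le : Q1 n ≤ suppSub (fun α => ∀ i, α i ≤ 1) := by
  rw [Q1, Submodule.span_le]
  rintro p ⟨α, hα, rfl⟩ β hβ
  rcases Finset.mem_singleton.mp (MvPolynomial.support_monomial_subset hβ) with rfl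
  exact hα

lemma spanB_le :
    Submodule.span ℝ ({1} ∪ {p | ∃ k : Fin n, p = X k ^ 2 ∨ p = X k ^ 4})
      ≤ suppSub (fun α => (∀ i j, α i ≠ 0 → α j ≠ 0 → i = j) ∧ ∀ i, α i ≤ 4) := by
  rw [Submodule.span_le]
  rintro p (rfl | ⟨k, rfl | rfl⟩) <;> intro β hβ
  · rcases Finset.mem_singleton.mp (by simpa using (MvPolynomial.support_monomial_subset
      (s := 0) (a := (1:ℝ)) (by simpa using hβ))) with rfl
    exact ⟨fun i j hi => absurd rfl hi, fun i => by simp⟩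
  · rw [MvPolynomial.X_pow_eq_monomial] at hβ
    rcases Finset.mem_singleton.mp (MvPolynomial.support_monomial_subset hβ) with rfl
    constructor
    · intro i j hi hj
      rw [Finsupp.single_apply_ne_zero] at hi hj
      rw [hi.1, hj.1]
    · intro i
      rcases eq_or_ne i k with rfl | h
      · simp
      · simp [Finsupp.single_apply_eq_zero.mpr, h.symm, Finsupp.single_eq_of_ne (Ne.symm h)]
  · rw [MvPolynomial.X_pow_eq_monomial] at hβ
    rcases Finset.mem_singleton.mp (MvPolynomial.support_monomial_subset hβ) with rfl
    constructor
    · intro i j hi hj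
      rw [Finsupp.single_apply_ne_zero] at hi hj
      rw [hi.1, hj.1]
    · intro i
      rcases eq_or_ne i k with rfl | h
      · simp
      · simp [Finsupp.single_eq_of_ne' (Ne.symm h)]

lemma PA_le : PA n ≤ suppSub (fun α =>
    (∀ i j, 2 ≤ α i → 2 ≤ α j → i = j) ∧ ∀ i, α i ≤ 5) := by
  rw [PA, prodSpan, Submodule.span_le]
  rintro p ⟨a, ha, b, hb, rfl⟩ γ hγ
  have ha' := Q1_le ha
  have hb' := spanB_le hb
  have := MvPolynomial.support_mul a b hγ
  rw [Finset.mem_add] at this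
  obtain ⟨α, hα, β, hβ, rfl⟩ := this
  have hA := ha' α hα
  have hB := hb' β hβ
  constructor
  · intro i j hi hj
    have hβi : β i ≠ 0 := by
      have := hA i; simp only [Finsupp.add_apply] at hi; omega
    have hβj : β j ≠ 0 := by
      have := hA j; simp only [Finsupp.add_apply] at hj; omega
    exact hB.1 i j hβi hβj
  · intro i
    have := hA i; have := hB.2 i
    simp only [Finsupp.add_apply]; omega

lemma psi_monomial (a : Fin n) (c : ℝ) (α : Fin n →₀ ℕ) (r : ℝ) :
    psi a c (monomial α r) = (c ^ α a) • monomial (α.erase a) r := by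
  classical
  rw [psi, aeval_monomial]
  rw [← Finsupp.mul_prod_erase' α a _ (fun i => pow_zero _)]
  have h2 : (α.erase a).prod (fun i e => (if i = a then C c else X i : MvPolynomial (Fin n) ℝ) ^ e)
      = (α.erase a).prod (fun i e => (X i : MvPolynomial (Fin n) ℝ) ^ e) := by
    apply Finsupp.prod_congr
    intro i hi
    have hia : i ≠ a := by
      intro h; subst h
      simp [Finsupp.support_erase] at hi
    simp [hia]
  rw [h2, if_pos rfl, ← map_pow]
  rw [monomial_eq (s := α.erase a), smul_eq_C_mul, algebraMap_eq]
  ring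

lemma psi_mem {M : Submodule ℝ (MvPolynomial (Fin n) ℝ)} (a : Fin n) (c : ℝ)
    {v : MvPolynomial (Fin n) ℝ}
    (h : ∀ α ∈ v.support, monomial (α.erase a) (coeff α v) ∈ M) :
    psi a c v ∈ M := by
  rw [← MvPolynomial.support_sum_monomial_coeff v, map_sum]
  apply Submodule.sum_mem
  intro α hα
  rw [psi_monomial]
  exact Submodule.smul_mem _ _ (h α hα)

lemma pderiv_mem {M : Submodule ℝ (MvPolynomial (Fin n) ℝ)} (j : Fin n)
    {v : MvPolynomial (Fin n) ℝ}
    (h : ∀ α ∈ v.support, monomial (α - Finsupp.single j 1) (coeff α v * α j) ∈ M) :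
    pderiv j v ∈ M := by
  have : pderiv j v = pderiv j (∑ α ∈ v.support, monomial α (coeff α v)) := by
    rw [MvPolynomial.support_sum_monomial_coeff v]
  rw [this, map_sum]
  apply Submodule.sum_mem
  intro α hα
  rw [pderiv_monomial]
  exact h α hα

lemma psi_Q1 (a : Fin n) (c : ℝ) {v : MvPolynomial (Fin n) ℝ} (hv : v ∈ Q1 n) :
    psi a c v ∈ Q1 n := by
  apply psi_mem
  intro α hα
  have hm : ∀ i, α.erase a i ≤ 1 := by
    intro i
    rcases eq_or_ne i a with rfl | h
    · simp
    · rw [Finsupp.erase_ne h]; exact Q1_le hv α hα i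
  have : monomial (α.erase a) (coeff α v) = coeff α v • monomial (α.erase a) (1:ℝ) := by
    rw [smul_monomial, smul_eq_mul, mul_one]
  rw [this]
  exact Submodule.smul_mem _ _ (Submodule.subset_span ⟨α.erase a, hm, rfl⟩)

lemma psi_spanB (a : Fin n) (c : ℝ) (hc : c = 1 ∨ c = -1)
    {v : MvPolynomial (Fin n) ℝ}
    (hv : v ∈ Submodule.span ℝ ({1} ∪ {p | ∃ k : Fin n, p = X k ^ 2 ∨ p = X k ^ 4})) :
    psi a c v ∈ Submodule.span ℝ ({1} ∪ {p | ∃ k : Fin n, p = X k ^ 2 ∨ p = X k ^ 4}) := by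
  have hc2 : c ^ 2 = 1 := by rcases hc with rfl | rfl <;> norm_num
  have hc4 : c ^ 4 = 1 := by rcases hc with rfl | rfl <;> norm_num
  have := Submodule.mem_map_of_mem (f := (psi a c).toLinearMap) hv
  rw [Submodule.map_span] at this
  refine Submodule.span_le.mpr ?_ this
  rintro p ⟨q, (rfl | ⟨k, rfl | rfl⟩), rfl⟩
  · simp only [AlgHom.toLinearMap_apply, map_one]
    exact Submodule.subset_span (Set.mem_union_left _ rfl)
  · simp only [AlgHom.toLinearMap_apply, map_pow]
    rcases eq_or_ne k a with rfl | h
    · rw [psi, aeval_X, if_pos rfl, ← map_pow, hc2, map_one]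
      exact Submodule.subset_span (Set.mem_union_left _ rfl)
    · rw [psi, aeval_X, if_neg h]
      exact Submodule.subset_span (Set.mem_union_right _ ⟨k, Or.inl rfl⟩)
  · simp only [AlgHom.toLinearMap_apply, map_pow]
    rcases eq_or_ne k a with rfl | h
    · rw [psi, aeval_X, if_pos rfl, ← map_pow, hc4, map_one]
      exact Submodule.subset_span (Set.mem_union_left _ rfl)
    · rw [psi, aeval_X, if_neg h]
      exact Submodule.subset_span (Set.mem_union_right _ ⟨k, Or.inr rfl⟩)

lemma psi_PA (a : Fin n) (c : ℝ) (hc : c = 1 ∨ c = -1)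
    {v : MvPolynomial (Fin n) ℝ} (hv : v ∈ PA n) : psi a c v ∈ PA n := by
  have := Submodule.mem_map_of_mem (f := (psi a c).toLinearMap) hv
  rw [PA, prodSpan, Submodule.map_span] at this
  refine Submodule.span_le.mpr ?_ this
  rintro p ⟨q, ⟨x, hx, y, hy, rfl⟩, rfl⟩
  simp only [AlgHom.toLinearMap_apply, map_mul]
  exact Submodule.subset_span ⟨psi a c x, psi_Q1 a c hx, psi a c y, psi_spanB a c hc hy, rfl⟩

/-- The "involves only variables in `s`" submodule. -/
noncomputable def Vsub (s : Finset (Fin n)) : Submodule ℝ (MvPolynomial (Fin n) ℝ) :=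
  suppSub (fun α => ∀ i ∉ s, α i = 0)

lemma psi_Vsub (a : Fin n) (c : ℝ) {s : Finset (Fin n)} {v : MvPolynomial (Fin n) ℝ}
    (hv : v ∈ Vsub s) : psi a c v ∈ Vsub (s.erase a) := by
  apply psi_mem
  intro α hα β hβ
  rcases Finset.mem_singleton.mp (MvPolynomial.support_monomial_subset hβ) with rfl
  intro i hi
  rcases eq_or_ne i a with rfl | h
  · simp
  · rw [Finsupp.erase_ne h]
    exact hv α hα i (fun his => hi (Finset.mem_erase.mpr ⟨h, his⟩))

lemma pderiv_Vsub (j : Fin n) {s : Finset (Fin n)} {v : MvPolynomial (Fin n) ℝ}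
    (hv : v ∈ Vsub s) : pderiv j v ∈ Vsub s := by
  apply pderiv_mem
  intro α hα β hβ
  rcases Finset.mem_singleton.mp (MvPolynomial.support_monomial_subset hβ) with rfl
  intro i hi
  have := hv α hα i hi
  simp [Finsupp.tsub_apply, this]

lemma pderiv_eq_zero_of_not_mem (j : Fin n) {s : Finset (Fin n)} (hj : j ∉ s)
    {v : MvPolynomial (Fin n) ℝ} (hv : v ∈ Vsub s) : pderiv j v = 0 := by
  have : pderiv j v ∈ (⊥ : Submodule ℝ (MvPolynomial (Fin n) ℝ)) := by
    apply pderiv_mem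
    intro α hα
    have : α j = 0 := hv α hα j hj
    rw [this]
    simp
  simpa using this

lemma pderiv_psi (a : Fin n) (c : ℝ) {j : Fin n} (hj : j ≠ a)
    (p : MvPolynomial (Fin n) ℝ) :
    pderiv j (psi a c p) = psi a c (pderiv j p) := by
  induction p using MvPolynomial.induction_on with
  | C r => simp [psi]
  | add p q hp hq => simp [map_add, hp, hq]
  | mul_X p i hp =>
      rw [map_mul, pderiv_mul, pderiv_mul, map_add, map_mul, map_mul, hp]
      congr 1
      rcases eq_or_ne i a with rfl | h
      · rw [psi, aeval_X, if_pos rfl]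
        simp [pderiv_X, hj]
      · rw [psi, aeval_X, if_neg h]
        by_cases hij : i = j
        · subst hij; simp
        · simp [pderiv_X, Ne.symm hij, hij]

/-- For a univariate (in `x_a`) polynomial, evaluation only depends on coordinate `a`. -/
lemma eval_const_of_Vsub_singleton (a : Fin n) {v : MvPolynomial (Fin n) ℝ}
    (hv : v ∈ Vsub {a}) (x : Fin n → ℝ) :
    eval x v = eval (fun _ => x a) v := by
  conv_lhs => rw [← MvPolynomial.support_sum_monomial_coeff v]
  conv_rhs => rw [← MvPolynomial.support_sum_monomial_coeff v]
  rw [map_sum, map_sum]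
  apply Finset.sum_congr rfl
  intro α hα
  rw [eval_monomial, eval_monomial]
  congr 1
  apply Finsupp.prod_congr
  intro i hi
  have : i = a := by
    by_contra h
    exact (Finsupp.mem_support_iff.mp hi) (hv α hα i (by simp [h]))
  subst this
  rfl

/-- `β` is the coordinatewise-maximal exponent of `u`. -/
def TopMon (u : MvPolynomial (Fin n) ℝ) (β : Fin n →₀ ℕ) : Prop :=
  β ∈ u.support ∧ ∀ γ ∈ u.support, β ≤ γ → γ = β

lemma exists_top {u : MvPolynomial (Fin n) ℝ} (hu : u ≠ 0) : ∃ β, TopMon u β := by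
  have hne : u.support.Nonempty := by
    rw [Finset.nonempty_iff_ne_empty]
    simpa [MvPolynomial.support_eq_empty] using hu
  obtain ⟨β, hβ, hmax⟩ := Finset.exists_max_image u.support (fun α => ∑ i, α i) hne
  refine ⟨β, hβ, fun γ hγ hle => ?_⟩
  have hpt : ∀ i, β i ≤ γ i := fun i => hle i
  have hsum : ∑ i, γ i ≤ ∑ i, β i := hmax γ hγ
  have heq : ∑ i, β i = ∑ i, γ i :=
    le_antisymm (Finset.sum_le_sum fun i _ => hpt i) hsum
  ext i
  exact ((Finset.sum_eq_sum_iff_of_le fun i _ => hpt i).1 heq i (Finset.mem_univ i)).symm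

lemma isTop_step (a : Fin n) {u : MvPolynomial (Fin n) ℝ} {β : Fin n →₀ ℕ}
    (h : TopMon u β) :
    TopMon ((X a ^ 2 - 1) * u) (β + Finsupp.single a 2) := by
  classical
  obtain ⟨hmem, hmax⟩ := h
  have hco : ∀ m, coeff m ((X a ^ 2 - 1 : MvPolynomial (Fin n) ℝ) * u)
      = (if Finsupp.single a 2 ≤ m then coeff (m - Finsupp.single a 2) u else 0) - coeff m u := by
    intro m
    have : (X a ^ 2 - 1 : MvPolynomial (Fin n) ℝ) * u
        = monomial (Finsupp.single a 2) (1:ℝ) * u - u := by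
      rw [← X_pow_eq_monomial]; ring
    rw [this, coeff_sub, coeff_monomial_mul']
    simp
  have hkey : coeff (β + Finsupp.single a 2) ((X a ^ 2 - 1 : MvPolynomial (Fin n) ℝ) * u)
      = coeff β u := by
    rw [hco, if_pos le_add_self]
    have h1 : β + Finsupp.single a 2 - Finsupp.single a 2 = β := by
      ext i; simp
    have h2 : coeff (β + Finsupp.single a 2) u = 0 := by
      by_contra hne
      have := hmax _ (MvPolynomial.mem_support_iff.mpr hne) le_self_add
      have := DFunLike.congr_fun this a
      simp at this
    rw [h1, h2, sub_zero]
  constructor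
  · rw [MvPolynomial.mem_support_iff, hkey]
    exact MvPolynomial.mem_support_iff.mp hmem
  · intro γ hγ hle
    have hne : coeff γ ((X a ^ 2 - 1 : MvPolynomial (Fin n) ℝ) * u) ≠ 0 :=
      MvPolynomial.mem_support_iff.mp hγ
    rw [hco] at hne
    by_cases hc : Finsupp.single a 2 ≤ γ
    · -- compare
      by_cases hδ : coeff (γ - Finsupp.single a 2) u = 0
      · -- then coeff γ u ≠ 0, γ ∈ supp u ; but γ ≥ β + single > β
        rw [if_pos hc, hδ, zero_sub, neg_ne_zero] at hne
        have hγu := MvPolynomial.mem_support_iff.mpr hne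
        have hγβ : γ = β := hmax γ hγu (le_trans le_self_add hle)
        exfalso
        have hh := hle a
        rw [hγβ] at hh
        simp at hh
      · have hδm := MvPolynomial.mem_support_iff.mpr hδ
        have hβle : β ≤ γ - Finsupp.single a 2 := by
          intro i
          have := hle i
          rcases eq_or_ne i a with rfl | hia
          · simp only [Finsupp.coe_add, Pi.add_apply, Finsupp.single_eq_same] at this
            simp only [Finsupp.tsub_apply, Finsupp.single_eq_same]
            omega
          · simp only [Finsupp.coe_add, Pi.add_apply,
              Finsupp.single_eq_of_ne (Ne.symm hia)] at this
            simp only [Finsupp.tsub_apply, Finsupp.single_eq_of_ne (Ne.symm hia)]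
            omega
        have := hmax _ hδm hβle
        have hγβ : γ = β + Finsupp.single a 2 := by
          ext i
          have h1 := DFunLike.congr_fun this i
          have h2 := hc i
          simp only [Finsupp.tsub_apply] at h1
          simp only [Finsupp.coe_add, Pi.add_apply]
          rcases eq_or_ne i a with rfl | hia
          · simp only [Finsupp.single_eq_same] at h1 h2 ⊢
            omega
          · simp only [Finsupp.single_eq_of_ne' (Ne.symm hia)] at h1 h2 ⊢
            omega
        exact hγβ
    · rw [if_neg hc, zero_sub, neg_ne_zero] at hne
      exact absurd (le_trans le_add_self hle) hc

lemma topMon_prod (s : Finset (Fin n)) {w : MvPolynomial (Fin n) ℝ} {β : Fin n →₀ ℕ}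
    (h : TopMon w β) :
    TopMon ((∏ i ∈ s, (X i - 1) * (X i + 1)) * w) (β + ∑ i ∈ s, Finsupp.single i 2) := by
  classical
  induction s using Finset.induction_on with
  | empty => simpa using h
  | @insert a s ha ih =>
      rw [Finset.prod_insert ha, Finset.sum_insert ha]
      have e1 : ((X a - 1) * (X a + 1) * ∏ i ∈ s, (X i - 1) * (X i + 1)) * w
          = (X a ^ 2 - 1) * ((∏ i ∈ s, (X i - 1) * (X i + 1)) * w) := by ring
      have e2 : β + (Finsupp.single a 2 + ∑ i ∈ s, Finsupp.single i 2)
          = (β + ∑ i ∈ s, Finsupp.single i 2) + Finsupp.single a 2 := by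
        abel
      rw [e1, e2]
      exact isTop_step a ih

/-- All Adini DoFs vanish. -/
def DoF0 (v : MvPolynomial (Fin n) ℝ) : Prop :=
  ∀ a : Fin n → ℝ, (∀ i, a i = 1 ∨ a i = -1) →
    eval a v = 0 ∧ ∀ j : Fin n, eval a (pderiv j v) = 0 ∧
      eval a (pderiv j (pderiv j v)) = 0

lemma psi_q_eq_zero (a : Fin n) {c : ℝ} (hc : c = 1 ∨ c = -1) :
    psi a c ((X a - 1) * (X a + 1)) = 0 := by
  have : psi a c ((X a - 1) * (X a + 1)) = (C c - 1) * (C c + 1) := by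
    rw [map_mul, map_sub, map_add, map_one]
    have := psi_X_self a c
    rw [this]
  rw [this, ← map_one (C : ℝ →+* MvPolynomial (Fin n) ℝ), ← C_sub, ← C_add, ← C_mul]
  have : (c - 1) * (c + 1) = 0 := by rcases hc with rfl | rfl <;> ring
  rw [this, map_zero]

lemma pderiv_q (a : Fin n) :
    pderiv a ((X a - 1 : MvPolynomial (Fin n) ℝ) * (X a + 1)) = 2 * X a := by
  rw [pderiv_mul]
  simp
  ring

/-- Main unisolvence induction over the set of active variables. -/
lemma main_unisolvence (s : Finset (Fin n)) :
    ∀ v ∈ PA n, v ∈ Vsub s → DoF0 v → v = 0 := by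
  classical
  induction s using Finset.strongInduction with
  | _ s IH =>
  intro v hPA hV hDoF
  -- Step A : all single-variable substitutions vanish
  have stepA : ∀ a ∈ s, ∀ c : ℝ, (c = 1 ∨ c = -1) → psi a c v = 0 := by
    intro a ha c hc
    apply IH (s.erase a) (Finset.erase_ssubset ha) _ (psi_PA a c hc hPA) (psi_Vsub a c hV)
    intro b hb
    have hb' : ∀ i, Function.update b a c i = 1 ∨ Function.update b a c i = -1 := by
      intro i
      rcases eq_or_ne i a with rfl | h
      · rw [Function.update_self]; exact hc
      · rw [Function.update_of_ne h]; exact hb i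
    refine ⟨by rw [eval_psi]; exact (hDoF _ hb').1, ?_⟩
    intro j
    rcases eq_or_ne j a with rfl | hj
    · have h0 : pderiv j (psi j c v) = 0 :=
        pderiv_eq_zero_of_not_mem j (Finset.notMem_erase j s) (psi_Vsub j c hV)
      rw [h0]
      constructor <;> simp
    · constructor
      · rw [pderiv_psi a c hj, eval_psi]
        exact ((hDoF _ hb').2 j).1
      · rw [pderiv_psi a c hj, pderiv_psi a c hj, eval_psi]
        exact ((hDoF _ hb').2 j).2
  rcases Finset.eq_empty_or_nonempty s with rfl | hsne
  · -- constant polynomial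
    have hvC : v = C (coeff 0 v) := by
      apply MvPolynomial.ext
      intro β
      rcases eq_or_ne β 0 with rfl | hβ
      · simp
      · rw [coeff_C, if_neg (Ne.symm hβ)]
        by_contra hne
        apply hβ
        ext i
        exact hV β (MvPolynomial.mem_support_iff.mpr hne) i (Finset.notMem_empty i)
    have h1 : eval (fun _ => (1:ℝ)) v = 0 := (hDoF _ (fun i => Or.inl rfl)).1
    rw [hvC] at h1 ⊢
    rw [eval_C] at h1
    rw [h1, map_zero]
  · obtain ⟨w, hw⟩ := prod_q_dvd s v (fun i hi =>
      ⟨stepA i hi 1 (Or.inl rfl), stepA i hi (-1) (Or.inr rfl)⟩)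
    rcases eq_or_ne w 0 with rfl | hwne
    · rw [hw, mul_zero]
    by_cases hcard : 1 < s.card
    · -- two distinct active variables : contradiction with the shape of PA
      exfalso
      obtain ⟨β, hβ⟩ := exists_top hwne
      have htop := topMon_prod s hβ
      rw [← hw] at htop
      obtain ⟨i, hi, j, hj, hij⟩ := Finset.one_lt_card.mp hcard
      have hsum : ∀ k ∈ s, (∑ l ∈ s, Finsupp.single l 2) k = 2 := by
        intro k hk
        rw [Finset.sum_apply']
        rw [Finset.sum_eq_single k]
        · simp
        · intro l _ hlk; exact Finsupp.single_eq_of_ne' hlk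
        · intro h; exact absurd hk h
      have hprop := (PA_le hPA _ htop.1).1 i j ?_ ?_
      · exact hij hprop
      · simp only [Finsupp.coe_add, Pi.add_apply, hsum i hi]; omega
      · simp only [Finsupp.coe_add, Pi.add_apply, hsum j hj]; omega
    · -- single active variable `a` : use derivative degrees of freedom
      obtain ⟨a, rfl⟩ : ∃ a, s = {a} := by
        obtain ⟨a, ha⟩ := hsne
        refine ⟨a, Finset.eq_singleton_iff_unique_mem.mpr ⟨ha, fun b hb => ?_⟩⟩
        by_contra hba
        exact hcard (Finset.one_lt_card.mpr ⟨b, hb, a, ha, hba⟩)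
      rw [Finset.prod_singleton] at hw
      set q : MvPolynomial (Fin n) ℝ := (X a - 1) * (X a + 1) with hq
      have hwq : v = q * w := hw
      -- substitutions of polynomials depending only on `x_a` that vanish at vertices
      have hpsi_d : ∀ c : ℝ, (c = 1 ∨ c = -1) → ∀ m : MvPolynomial (Fin n) ℝ,
          m ∈ Vsub {a} → (∀ b : Fin n → ℝ, (∀ i, b i = 1 ∨ b i = -1) → eval b m = 0) →
          psi a c m = 0 := by
        intro c hc m hm hvan
        apply psi_eq_zero
        intro x hx
        rw [eval_const_of_Vsub_singleton a hm x, hx]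
        exact hvan (fun _ => c) (fun _ => hc)
      have hA : ∀ c : ℝ, (c = 1 ∨ c = -1) → psi a c q = 0 := fun c hc => psi_q_eq_zero a hc
      have hB : ∀ c : ℝ, psi a c (pderiv a q) = 2 * C c := by
        intro c
        rw [hq, pderiv_q, map_mul, map_ofNat, psi_X_self]
      have hDDq : pderiv a (pderiv a q) = 2 := by
        rw [hq, pderiv_q]
        have h2 : (2 * X a : MvPolynomial (Fin n) ℝ) = C 2 * X a := by rw [map_ofNat]
        rw [h2, pderiv_C_mul, pderiv_X_self, mul_one]
        exact map_ofNat C 2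
      -- first division : w(±1) = 0
      have hpsiw : ∀ c : ℝ, (c = 1 ∨ c = -1) → psi a c w = 0 := by
        intro c hc
        have hdv : psi a c (pderiv a v) = 0 := by
          refine hpsi_d c hc _ (pderiv_Vsub a hV) ?_
          intro b hb
          exact ((hDoF b hb).2 a).1
        have e1 : pderiv a v = pderiv a q * w + q * pderiv a w := by
          rw [hwq, pderiv_mul]
        apply MvPolynomial.funext
        intro x
        have h0 := congrArg (eval x) hdv
        rw [e1] at h0
        simp only [map_add, map_mul, map_zero, hA c hc, hB c, zero_mul, add_zero,
          eval_C, eval_ofNat] at h0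
        rcases hc with rfl | rfl <;>
          [skip; skip] <;> · rw [map_zero]; nlinarith [h0]
      obtain ⟨u, hu⟩ := q_dvd a w (hpsiw 1 (Or.inl rfl)) (hpsiw (-1) (Or.inr rfl))
      have huq : w = q * u := hu
      rcases eq_or_ne u 0 with rfl | hune
      · rw [hwq, huq, mul_zero, mul_zero]
      -- second division : u(±1) = 0
      have hpsiu : ∀ c : ℝ, (c = 1 ∨ c = -1) → psi a c u = 0 := by
        intro c hc
        have hdv : psi a c (pderiv a (pderiv a v)) = 0 := by
          refine hpsi_d c hc _ (pderiv_Vsub a (pderiv_Vsub a hV)) ?_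
          intro b hb
          exact ((hDoF b hb).2 a).2
        have hvq : v = q * (q * u) := by rw [hwq, huq]
        have e2 : pderiv a (pderiv a v) =
            pderiv a (pderiv a q) * (q * u)
            + 2 * (pderiv a q * (pderiv a q * u + q * pderiv a u))
            + q * (pderiv a (pderiv a q) * u + 2 * (pderiv a q * pderiv a u)
                + q * pderiv a (pderiv a u)) := by
          rw [hvq]
          simp only [pderiv_mul, map_add]
          ring
        apply MvPolynomial.funext
        intro x
        have h0 := congrArg (eval x) hdv
        rw [e2] at h0
        simp only [map_add, map_mul, map_zero, map_ofNat, hA c hc, hB c, hDDq, zero_mul,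
          add_zero, mul_zero, eval_C, eval_ofNat] at h0
        rcases hc with rfl | rfl <;>
          [skip; skip] <;> · rw [map_zero]; nlinarith [h0]
      obtain ⟨t, ht⟩ := q_dvd a u (hpsiu 1 (Or.inl rfl)) (hpsiu (-1) (Or.inr rfl))
      have htq : u = q * t := ht
      rcases eq_or_ne t 0 with rfl | htne
      · rw [hwq, huq, htq, mul_zero, mul_zero, mul_zero]
      exfalso
      obtain ⟨β, hβ⟩ := exists_top htne
      have step3 := isTop_step a (isTop_step a (isTop_step a hβ))
      have hvt : v = (X a ^ 2 - 1) * ((X a ^ 2 - 1) * ((X a ^ 2 - 1) * t)) := by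
        rw [hwq, huq, htq, hq]
        ring
      rw [← hvt] at step3
      have h5 := (PA_le hPA _ step3.1).2 a
      simp only [Finsupp.coe_add, Pi.add_apply, Finsupp.single_eq_same] at h5
      omega

/-- A polynomial vanishing identically on every hyperplane `x_i = 1` and `x_i = -1`
is divisible by `Π_i (x_i - 1)(x_i + 1)`; moreover, an element of the Adini-type
shape space `P_A` all of whose Adini-type degrees of freedom (vertex values,
first derivatives, and pure second derivatives at the vertices `{-1,1}^n`) vanish
must be zero. -/
theorem adini_divisibility_and_unisolvence (n : ℕ) (hn : 1 ≤ n) :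
    (∀ v : MvPolynomial (Fin n) ℝ,
      (∀ i : Fin n, ∀ a : Fin n → ℝ, (a i = 1 ∨ a i = -1) → eval a v = 0) →
      (∏ i, (X i - 1) * (X i + 1)) ∣ v) ∧
    (∀ v ∈ PA n,
      (∀ a : Fin n → ℝ, (∀ i, a i = 1 ∨ a i = -1) →
        eval a v = 0 ∧ ∀ j : Fin n, eval a (pderiv j v) = 0 ∧
          eval a (pderiv j (pderiv j v)) = 0) →
      v = 0) := by
  constructor
  · intro v hv
    apply prod_q_dvd
    intro i _
    constructor
    · exact psi_eq_zero i 1 v (fun x hx => hv i x (Or.inl hx))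
    · exact psi_eq_zero i (-1) v (fun x hx => hv i x (Or.inr hx))
  · intro v hPA hDoF
    refine main_unisolvence Finset.univ v hPA ?_ hDoF
    intro α _ i hi
    exact absurd (Finset.mem_univ i) hi
end
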